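/- For every w > 0 and R > 0, there exists a unique s = s(w,R) ∈ (0,w) that maximizes σ ↦ u(w − σ) + v(R·σ) over (0, w). Furthermore, the function (w,R) ↦ s(w,R) is continuous, strictly increasing in w, and nondecreasing in R. -/

import Mathlib

open Filter Topology Set

/-- Lemma `lem:s`: for additively separable utility
`u(w - σ) + v(R σ)` with `u, v` continuously differentiable, `u', v' > 0`
strictly decreasing, Inada conditions, and `c ↦ c v'(c)` nondecreasing, there is a
unique interior maximizer `s(w,R) ∈ (0,w)`, and `(w,R) ↦ s(w,R)` is continuous,
strictly increasing in `w`, and nondecreasing in `R`. -/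
theorem stmt1 (u v u' v' : ℝ → ℝ)
    (hu : ∀ c > (0:ℝ), HasDerivAt u (u' c) c)
    (hu'cont : ContinuousOn u' (Set.Ioi 0))
    (hu'pos : ∀ c > (0:ℝ), 0 < u' c)
    (hu'anti : StrictAntiOn u' (Set.Ioi 0))
    (hu'inf : Tendsto u' (nhdsWithin 0 (Set.Ioi 0)) atTop)
    (hv : ∀ c > (0:ℝ), HasDerivAt v (v' c) c)
    (hv'cont : ContinuousOn v' (Set.Ioi 0))
    (hv'pos : ∀ c > (0:ℝ), 0 < v' c)
    (hv'anti : StrictAntiOn v' (Set.Ioi 0))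
    (hv'inf : Tendsto v' (nhdsWithin 0 (Set.Ioi 0)) atTop)
    (hcv' : MonotoneOn (fun c => c * v' c) (Set.Ioi 0)) :
    ∃ sf : ℝ → ℝ → ℝ,
      (∀ w > (0:ℝ), ∀ R > (0:ℝ),
        sf w R ∈ Set.Ioo 0 w ∧
        ∀ σ ∈ Set.Ioo (0:ℝ) w, σ ≠ sf w R →
          u (w - σ) + v (R * σ) < u (w - sf w R) + v (R * sf w R)) ∧
      ContinuousOn (fun wR : ℝ × ℝ => sf wR.1 wR.2) (Set.Ioi 0 ×ˢ Set.Ioi 0) ∧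
      (∀ R > (0:ℝ), StrictMonoOn (fun w => sf w R) (Set.Ioi 0)) ∧
      (∀ w > (0:ℝ), MonotoneOn (fun R => sf w R) (Set.Ioi 0)) := by
  classical
  -- the marginal "loss" function g w R σ = u'(w-σ) - R v'(Rσ); its zero is the maximizer
  set g : ℝ → ℝ → ℝ → ℝ := fun w R σ => u' (w - σ) - R * v' (R * σ) with hgdef
  -- g is strictly increasing in σ on (0, w)
  have gmono : ∀ w > (0:ℝ), ∀ R > (0:ℝ), StrictMonoOn (g w R) (Ioo 0 w) := by
    intro w hw R hR σ₁ h₁ σ₂ h₂ hlt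
    have ha : u' (w - σ₁) < u' (w - σ₂) := by
      apply hu'anti (by simp only [mem_Ioi]; linarith [h₂.2]) (by simp only [mem_Ioi]; linarith [h₁.2])
      linarith
    have hb : v' (R * σ₂) < v' (R * σ₁) := by
      apply hv'anti (by simp only [mem_Ioi]; exact mul_pos hR h₁.1) (by simp only [mem_Ioi]; exact mul_pos hR h₂.1)
      nlinarith [h₁.1]
    simp only [hgdef]
    nlinarith
  -- existence of a zero of g in (0, w)
  have hex : ∀ w > (0:ℝ), ∀ R > (0:ℝ), ∃ s ∈ Ioo (0:ℝ) w, u' (w - s) = R * v' (R * s) := by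
    intro w hw R hR
    -- choose a close to 0 where g < 0
    obtain ⟨δ₁, hδ₁pos, hδ₁⟩ : ∃ δ > (0:ℝ), ∀ c ∈ Ioo (0:ℝ) δ, u' (w/2) / R < v' c := by
      have h := hv'inf.eventually_gt_atTop (u' (w/2) / R)
      obtain ⟨δ, hδ, hsub⟩ := mem_nhdsGT_iff_exists_Ioo_subset.1 h
      exact ⟨δ, hδ, fun c hc => hsub hc⟩
    set a : ℝ := min (w/4) (δ₁ / (2*R)) with hadef
    have hapos : 0 < a := by positivity
    have haw4 : a ≤ w/4 := min_le_left _ _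
    have hga : g w R a < 0 := by
      have h1 : u' (w - a) < u' (w/2) := by
        apply hu'anti (by simp only [mem_Ioi]; linarith) (by simp only [mem_Ioi]; linarith)
        linarith
      have h2 : u' (w/2) / R < v' (R * a) := by
        apply hδ₁
        constructor
        · positivity
        · have : R * a ≤ R * (δ₁ / (2*R)) := by
            apply mul_le_mul_of_nonneg_left (min_le_right _ _) hR.le
          have h2R : R * (δ₁ / (2*R)) = δ₁ / 2 := by field_simp
          linarith [hδ₁pos]
      have h3 : u' (w/2) < R * v' (R * a) := by
        rw [div_lt_iff₀ hR] at h2; linarith [h2]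
      simp only [hgdef]
      linarith
    -- choose b close to w where g > 0
    obtain ⟨δ₂, hδ₂pos, hδ₂⟩ : ∃ δ > (0:ℝ), ∀ c ∈ Ioo (0:ℝ) δ, R * v' (R * (w/2)) < u' c := by
      have h := hu'inf.eventually_gt_atTop (R * v' (R * (w/2)))
      obtain ⟨δ, hδ, hsub⟩ := mem_nhdsGT_iff_exists_Ioo_subset.1 h
      exact ⟨δ, hδ, fun c hc => hsub hc⟩
    set m : ℝ := min (w/4) (δ₂ / 2) with hmdef
    have hmpos : 0 < m := by positivity
    have hmw4 : m ≤ w/4 := min_le_left _ _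
    set b : ℝ := w - m with hbdef
    have hgb : 0 < g w R b := by
      have h1 : R * v' (R * (w/2)) < u' (w - b) := by
        apply hδ₂
        constructor
        · simp only [hbdef]; linarith
        · simp only [hbdef]
          have : m ≤ δ₂ / 2 := min_le_right _ _
          linarith
      have h2 : v' (R * b) < v' (R * (w/2)) := by
        apply hv'anti (by simp only [mem_Ioi]; positivity)
          (by simp only [mem_Ioi, hbdef]; nlinarith)
        simp only [hbdef]; nlinarith
      have h3 : R * v' (R * b) < R * v' (R * (w/2)) := by nlinarith
      simp only [hgdef]
      linarith
    have hab : a < b := by simp only [hbdef]; linarith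
    have habsub : Icc a b ⊆ Ioo 0 w := by
      intro x hx
      constructor
      · linarith [hx.1]
      · have : x ≤ b := hx.2
        simp only [hbdef] at this; linarith
    have hgcont : ContinuousOn (g w R) (Icc a b) := by
      intro x hx
      have hxm := habsub hx
      have c1 : ContinuousAt (fun σ : ℝ => u' (w - σ)) x := by
        apply ContinuousAt.comp
        · exact hu'cont.continuousAt (isOpen_Ioi.mem_nhds (by simp only [mem_Ioi]; linarith [hxm.2]))
        · exact (continuous_const.sub continuous_id).continuousAt
      have c2 : ContinuousAt (fun σ : ℝ => v' (R * σ)) x := by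
        apply ContinuousAt.comp
        · exact hv'cont.continuousAt (isOpen_Ioi.mem_nhds (by simp only [mem_Ioi]; exact mul_pos hR hxm.1))
        · exact (continuous_const.mul continuous_id).continuousAt
      exact ((c1.sub (continuousAt_const.mul c2))).continuousWithinAt
    have h0 : (0:ℝ) ∈ Icc (g w R a) (g w R b) := ⟨hga.le, hgb.le⟩
    obtain ⟨s, hsmem, hgs⟩ := intermediate_value_Icc hab.le hgcont h0
    refine ⟨s, habsub hsmem, ?_⟩
    have : u' (w - s) - R * v' (R * s) = 0 := hgs
    linarith
  -- define sf by choice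
  have hex' : ∀ w R : ℝ, ∃ s, 0 < w → 0 < R → s ∈ Ioo 0 w ∧ u' (w - s) = R * v' (R * s) := by
    intro w R
    by_cases h : 0 < w ∧ 0 < R
    · obtain ⟨s, hs1, hs2⟩ := hex w h.1 R h.2
      exact ⟨s, fun _ _ => ⟨hs1, hs2⟩⟩
    · exact ⟨0, fun hw hR => absurd ⟨hw, hR⟩ h⟩
  choose sf hsf using hex'
  have hmem : ∀ w > (0:ℝ), ∀ R > (0:ℝ), sf w R ∈ Ioo 0 w := fun w hw R hR => (hsf w R hw hR).1
  have hfoc : ∀ w > (0:ℝ), ∀ R > (0:ℝ), u' (w - sf w R) = R * v' (R * sf w R) :=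
    fun w hw R hR => (hsf w R hw hR).2
  have hgzero : ∀ w > (0:ℝ), ∀ R > (0:ℝ), g w R (sf w R) = 0 := by
    intro w hw R hR
    simp only [hgdef]
    have := hfoc w hw R hR
    linarith
  -- derivative of the objective
  have hderiv : ∀ w R σ : ℝ, 0 < R → σ ∈ Ioo 0 w →
      HasDerivAt (fun t => u (w - t) + v (R * t)) (-(g w R σ)) σ := by
    intro w R σ hR hσ
    have h1 : HasDerivAt (fun t : ℝ => u (w - t)) (u' (w - σ) * (-1)) σ :=
      (hu (w - σ) (by linarith [hσ.2])).comp σ ((hasDerivAt_id σ).const_sub w)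
    have h2 : HasDerivAt (fun t : ℝ => v (R * t)) (v' (R * σ) * (R * 1)) σ :=
      (hv (R * σ) (by have := hσ.1; positivity)).comp σ ((hasDerivAt_id σ).const_mul R)
    have h3 := h1.add h2
    refine h3.congr_deriv ?_
    show _ = -(u' (w - σ) - R * v' (R * σ)); ring
  -- strict maximizer property
  have hmax : ∀ w > (0:ℝ), ∀ R > (0:ℝ), ∀ σ ∈ Ioo (0:ℝ) w, σ ≠ sf w R →
      u (w - σ) + v (R * σ) < u (w - sf w R) + v (R * sf w R) := by
    intro w hw R hR σ hσ hne
    have hsmem := hmem w hw R hR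
    have hgz := hgzero w hw R hR
    set s := sf w R with hs
    set f : ℝ → ℝ := fun t => u (w - t) + v (R * t) with hf
    rcases hne.lt_or_gt with h | h
    · -- σ < s : f strictly increasing on [σ, s]
      have hsub : Icc σ s ⊆ Ioo 0 w := fun x hx =>
        ⟨lt_of_lt_of_le hσ.1 hx.1, lt_of_le_of_lt hx.2 hsmem.2⟩
      have hmono : StrictMonoOn f (Icc σ s) := by
        apply strictMonoOn_of_deriv_pos (convex_Icc _ _)
        · intro x hx
          exact (hderiv w R x hR (hsub hx)).continuousAt.continuousWithinAt
        · intro x hx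
          rw [interior_Icc] at hx
          have hxm : x ∈ Ioo 0 w := ⟨lt_trans hσ.1 hx.1, lt_trans hx.2 hsmem.2⟩
          rw [(hderiv w R x hR hxm).deriv]
          have : g w R x < g w R s := gmono w hw R hR hxm hsmem hx.2
          linarith
      exact hmono (left_mem_Icc.2 h.le) (right_mem_Icc.2 h.le) h
    · -- s < σ : f strictly decreasing on [s, σ]
      have hsub : Icc s σ ⊆ Ioo 0 w := fun x hx =>
        ⟨lt_of_lt_of_le hsmem.1 hx.1, lt_of_le_of_lt hx.2 hσ.2⟩
      have hanti : StrictAntiOn f (Icc s σ) := by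
        apply strictAntiOn_of_deriv_neg (convex_Icc _ _)
        · intro x hx
          exact (hderiv w R x hR (hsub hx)).continuousAt.continuousWithinAt
        · intro x hx
          rw [interior_Icc] at hx
          have hxm : x ∈ Ioo 0 w := ⟨lt_trans hsmem.1 hx.1, lt_trans hx.2 hσ.2⟩
          rw [(hderiv w R x hR hxm).deriv]
          have : g w R s < g w R x := gmono w hw R hR hsmem hxm hx.1
          linarith
      exact hanti (left_mem_Icc.2 h.le) (right_mem_Icc.2 h.le) h
  refine ⟨sf, fun w hw R hR => ⟨hmem w hw R hR, hmax w hw R hR⟩, ?_, ?_, ?_⟩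
  · -- continuity
    intro p hp
    obtain ⟨hw₀, hR₀⟩ := hp
    simp only [mem_Ioi] at hw₀ hR₀
    set w₀ := p.1
    set R₀ := p.2
    set s₀ := sf w₀ R₀ with hs₀
    have hs₀mem := hmem w₀ hw₀ R₀ hR₀
    have key : ∀ c ∈ Ioo (0:ℝ) w₀, g w₀ R₀ c < 0 →
        ∀ᶠ q : ℝ × ℝ in 𝓝[Ioi 0 ×ˢ Ioi 0] p, c < sf q.1 q.2 := by
      intro c hc hneg
      set H : ℝ × ℝ → ℝ := fun q => u' (q.1 - c) - q.2 * v' (q.2 * c) with hHdef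
      have hVopen : IsOpen (Ioi c ×ˢ Ioi (0:ℝ)) := isOpen_Ioi.prod isOpen_Ioi
      have hpV : p ∈ Ioi c ×ˢ Ioi (0:ℝ) := ⟨hc.2, hR₀⟩
      have hHcont : ContinuousAt H p := by
        have c1 : ContinuousAt (fun q : ℝ × ℝ => u' (q.1 - c)) p := by
          apply ContinuousAt.comp
          · exact hu'cont.continuousAt (isOpen_Ioi.mem_nhds (by simp only [mem_Ioi]; linarith [hc.2]))
          · exact (continuous_fst.sub continuous_const).continuousAt
        have c2 : ContinuousAt (fun q : ℝ × ℝ => v' (q.2 * c)) p := by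
          apply ContinuousAt.comp
          · apply hv'cont.continuousAt (isOpen_Ioi.mem_nhds _)
            simp only [mem_Ioi]
            exact mul_pos hR₀ hc.1
          · exact (continuous_snd.mul continuous_const).continuousAt
        exact c1.sub (continuous_snd.continuousAt.mul c2)
      have hHp : H p < 0 := hneg
      have e1 : ∀ᶠ q : ℝ × ℝ in 𝓝 p, H q < 0 := hHcont.tendsto.eventually_lt_const hHp
      have e2 : ∀ᶠ q : ℝ × ℝ in 𝓝 p, q ∈ Ioi c ×ˢ Ioi (0:ℝ) := hVopen.mem_nhds hpV
      have e3 : ∀ᶠ q : ℝ × ℝ in 𝓝[Ioi 0 ×ˢ Ioi 0] p, q ∈ (Ioi 0 ×ˢ Ioi 0 : Set (ℝ × ℝ)) :=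
        eventually_mem_nhdsWithin
      filter_upwards [(e1.and e2).filter_mono nhdsWithin_le_nhds, e3] with q hq hqS
      obtain ⟨hHq, hqV⟩ := hq
      have hqw : (0:ℝ) < q.1 := hqS.1
      have hqR : (0:ℝ) < q.2 := hqS.2
      have hcq : c ∈ Ioo (0:ℝ) q.1 := ⟨hc.1, hqV.1⟩
      have hsq := hmem q.1 hqw q.2 hqR
      have hgzq := hgzero q.1 hqw q.2 hqR
      by_contra hle
      push_neg at hle
      have : g q.1 q.2 (sf q.1 q.2) ≤ g q.1 q.2 c :=
        (gmono q.1 hqw q.2 hqR).monotoneOn hsq hcq hle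
      have hHqc : g q.1 q.2 c = H q := rfl
      rw [hgzq, hHqc] at this
      linarith
    have key2 : ∀ c ∈ Ioo (0:ℝ) w₀, 0 < g w₀ R₀ c →
        ∀ᶠ q : ℝ × ℝ in 𝓝[Ioi 0 ×ˢ Ioi 0] p, sf q.1 q.2 < c := by
      intro c hc hpos
      set H : ℝ × ℝ → ℝ := fun q => u' (q.1 - c) - q.2 * v' (q.2 * c) with hHdef
      have hVopen : IsOpen (Ioi c ×ˢ Ioi (0:ℝ)) := isOpen_Ioi.prod isOpen_Ioi
      have hpV : p ∈ Ioi c ×ˢ Ioi (0:ℝ) := ⟨hc.2, hR₀⟩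
      have hHcont : ContinuousAt H p := by
        have c1 : ContinuousAt (fun q : ℝ × ℝ => u' (q.1 - c)) p := by
          apply ContinuousAt.comp
          · exact hu'cont.continuousAt (isOpen_Ioi.mem_nhds (by simp only [mem_Ioi]; linarith [hc.2]))
          · exact (continuous_fst.sub continuous_const).continuousAt
        have c2 : ContinuousAt (fun q : ℝ × ℝ => v' (q.2 * c)) p := by
          apply ContinuousAt.comp
          · apply hv'cont.continuousAt (isOpen_Ioi.mem_nhds _)
            simp only [mem_Ioi]
            exact mul_pos hR₀ hc.1
          · exact (continuous_snd.mul continuous_const).continuousAt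
        exact c1.sub (continuous_snd.continuousAt.mul c2)
      have hHp : (0:ℝ) < H p := hpos
      have e1 : ∀ᶠ q : ℝ × ℝ in 𝓝 p, 0 < H q := hHcont.tendsto.eventually_const_lt hHp
      have e2 : ∀ᶠ q : ℝ × ℝ in 𝓝 p, q ∈ Ioi c ×ˢ Ioi (0:ℝ) := hVopen.mem_nhds hpV
      have e3 : ∀ᶠ q : ℝ × ℝ in 𝓝[Ioi 0 ×ˢ Ioi 0] p, q ∈ (Ioi 0 ×ˢ Ioi 0 : Set (ℝ × ℝ)) :=
        eventually_mem_nhdsWithin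
      filter_upwards [(e1.and e2).filter_mono nhdsWithin_le_nhds, e3] with q hq hqS
      obtain ⟨hHq, hqV⟩ := hq
      have hqw : (0:ℝ) < q.1 := hqS.1
      have hqR : (0:ℝ) < q.2 := hqS.2
      have hcq : c ∈ Ioo (0:ℝ) q.1 := ⟨hc.1, hqV.1⟩
      have hsq := hmem q.1 hqw q.2 hqR
      have hgzq := hgzero q.1 hqw q.2 hqR
      by_contra hle
      push_neg at hle
      have : g q.1 q.2 c ≤ g q.1 q.2 (sf q.1 q.2) :=
        (gmono q.1 hqw q.2 hqR).monotoneOn hcq hsq hle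
      have hHqc : g q.1 q.2 c = H q := rfl
      rw [hgzq, hHqc] at this
      linarith
    have : Tendsto (fun q : ℝ × ℝ => sf q.1 q.2) (𝓝[Ioi 0 ×ˢ Ioi 0] p) (𝓝 s₀) := by
      rw [tendsto_order]
      constructor
      · intro b hb
        rcases le_or_gt b 0 with hb0 | hb0
        · filter_upwards [eventually_mem_nhdsWithin] with q hq
          have := (hmem q.1 hq.1 q.2 hq.2).1
          linarith
        · have hbm : b ∈ Ioo (0:ℝ) w₀ := ⟨hb0, lt_trans hb hs₀mem.2⟩
          have hneg : g w₀ R₀ b < 0 := by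
            have := gmono w₀ hw₀ R₀ hR₀ hbm hs₀mem hb
            rw [hgzero w₀ hw₀ R₀ hR₀] at this
            exact this
          exact key b hbm hneg
      · intro b hb
        set c := (s₀ + min b w₀) / 2 with hcdef
        have hc1 : s₀ < c := by
          have : s₀ < min b w₀ := lt_min hb hs₀mem.2
          simp only [hcdef]; linarith
        have hc2 : c < w₀ := by
          have h1 : min b w₀ ≤ w₀ := min_le_right _ _
          simp only [hcdef]; linarith [hs₀mem.2]
        have hc3 : c < b := by
          have h1 : min b w₀ ≤ b := min_le_left _ _
          simp only [hcdef]; linarith [hb]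
        have hcm : c ∈ Ioo (0:ℝ) w₀ := ⟨lt_trans hs₀mem.1 hc1, hc2⟩
        have hpos : 0 < g w₀ R₀ c := by
          have := gmono w₀ hw₀ R₀ hR₀ hs₀mem hcm hc1
          rw [hgzero w₀ hw₀ R₀ hR₀] at this
          exact this
        filter_upwards [key2 c hcm hpos] with q hq
        linarith
    exact this
  · -- strictly increasing in w
    intro R hR
    intro w₁ hw₁ w₂ hw₂ hlt
    simp only [mem_Ioi] at hw₁ hw₂ hR
    have h₁ := hmem w₁ hw₁ R hR
    have h₂ := hmem w₂ hw₂ R hR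
    have f₁ := hfoc w₁ hw₁ R hR
    have f₂ := hfoc w₂ hw₂ R hR
    by_contra hle
    push_neg at hle
    -- sf w₂ R ≤ sf w₁ R, derive contradiction
    set s₁ := sf w₁ R
    set s₂ := sf w₂ R
    have ha : u' (w₂ - s₂) < u' (w₁ - s₁) := by
      apply hu'anti (by simp only [mem_Ioi]; linarith [h₁.2]) (by simp only [mem_Ioi]; linarith [h₂.2])
      linarith
    have hb : v' (R * s₁) ≤ v' (R * s₂) := by
      rcases eq_or_lt_of_le hle with h | h
      · rw [h]
      · exact le_of_lt (hv'anti (by simp only [mem_Ioi]; exact mul_pos hR h₂.1)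
          (by simp only [mem_Ioi]; exact mul_pos hR h₁.1) (by nlinarith))
    have : R * v' (R * s₁) ≤ R * v' (R * s₂) := by nlinarith
    rw [← f₁, ← f₂] at this
    linarith
  · -- nondecreasing in R
    intro w hw
    intro R₁ hR₁ R₂ hR₂ hle
    simp only [mem_Ioi] at hR₁ hR₂ hw
    rcases eq_or_lt_of_le hle with heq | hlt
    · rw [heq]
    by_contra hgt
    push_neg at hgt
    -- sf w R₂ < sf w R₁, derive contradiction
    set s₁ := sf w R₁
    set s₂ := sf w R₂
    have h₁ := hmem w hw R₁ hR₁
    have h₂ := hmem w hw R₂ hR₂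
    have f₁ := hfoc w hw R₁ hR₁
    have f₂ := hfoc w hw R₂ hR₂
    have hu12 : u' (w - s₂) < u' (w - s₁) := by
      apply hu'anti (by simp only [mem_Ioi]; linarith [h₁.2]) (by simp only [mem_Ioi]; linarith [h₂.2])
      linarith
    -- s u'(w-s) = (Rs) v'(Rs); compare via monotonicity of c ↦ c v'(c)
    have hkey : R₂ * s₂ < R₁ * s₁ := by
      by_contra hge
      push_neg at hge
      have hmm : R₁ * s₁ * v' (R₁ * s₁) ≤ R₂ * s₂ * v' (R₂ * s₂) :=
        hcv' (by simp only [mem_Ioi]; exact mul_pos hR₁ h₁.1)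
          (by simp only [mem_Ioi]; exact mul_pos hR₂ h₂.1) hge
      -- but s₂ u'(w-s₂) < s₁ u'(w-s₁)
      have hlhs : s₂ * u' (w - s₂) < s₁ * u' (w - s₁) := by
        have p1 : 0 < u' (w - s₂) := hu'pos _ (by linarith [h₂.2])
        nlinarith [h₂.1]
      have e₁ : s₁ * u' (w - s₁) = R₁ * s₁ * v' (R₁ * s₁) := by rw [f₁]; ring
      have e₂ : s₂ * u' (w - s₂) = R₂ * s₂ * v' (R₂ * s₂) := by rw [f₂]; ring
      rw [e₁, e₂] at hlhs
      linarith
    have hv12 : v' (R₁ * s₁) < v' (R₂ * s₂) :=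
      hv'anti (by simp only [mem_Ioi]; exact mul_pos hR₂ h₂.1)
        (by simp only [mem_Ioi]; exact mul_pos hR₁ h₁.1) hkey
    have hRv : R₁ * v' (R₁ * s₁) < R₂ * v' (R₂ * s₂) := by
      have p1 : 0 < v' (R₁ * s₁) := hv'pos _ (mul_pos hR₁ h₁.1)
      nlinarith
    rw [← f₁, ← f₂] at hRv
    linarith
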